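/- arXiv:2011.14074 — 3 statements merged into one kernel-verified Lean document; each statement's English description precedes it below -/
import Mathlib

section
/- Let F, G be locally finite pointed graphs with G connected, and let H be a graph. Suppose that for every connected finite pointed subgraph Ĝ of G, every red-blue edge coloring of F yields either a red copy of Ĝ as a pointed subgraph of F or a blue copy of H in F. Then every red-blue edge coloring of F yields either a red copy of G as a pointed subgraph of F or a blue copy of H in F. -/
open SimpleGraph

/-- `G` embeds into `H`: an injective graph homomorphism (not necessarily induced). -/
def EmbedsIn {α β : Type*} (G : SimpleGraph α) (H : SimpleGraph β) : Prop :=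
  ∃ f : G →g H, Function.Injective f

/-- `G` is self-embeddable: it admits an injective adjacency-preserving self-map whose
image, as a subgraph, is a proper subgraph (strictly smaller edge set). -/
def SelfEmbeddable {α : Type*} (G : SimpleGraph α) : Prop :=
  ∃ f : G →g G, Function.Injective f ∧ Sym2.map f '' G.edgeSet ⊂ G.edgeSet

/-- `G` is strongly self-embeddable: `G` embeds into `G - v` for every vertex `v`. -/
def StronglySelfEmbeddable {α : Type*} (G : SimpleGraph α) : Prop :=
  ∀ v : α, EmbedsIn G (G.induce ({v}ᶜ : Set α))

/-- The subgraph of `F` consisting of the edges with color `b` under coloring `c`. -/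
def colorSubgraph {α : Type*} (F : SimpleGraph α) (c : Sym2 α → Bool) (b : Bool) :
    SimpleGraph α where
  Adj x y := F.Adj x y ∧ c s(x, y) = b
  symm := by
    constructor
    intro x y h
    exact ⟨h.1.symm, by rw [Sym2.eq_swap]; exact h.2⟩
  loopless := by constructor; intro x h; exact F.loopless.irrefl x h.1

/-- `F → (G, H)` : every red-blue coloring of the edges of `F` yields a red copy of `G`
or a blue copy of `H` (here `true` = red, `false` = blue). -/
def Arrows {α β γ : Type*} (F : SimpleGraph α) (G : SimpleGraph β) (H : SimpleGraph γ) : Prop :=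
  ∀ c : Sym2 α → Bool,
    EmbedsIn G (colorSubgraph F c true) ∨ EmbedsIn H (colorSubgraph F c false)

/-- `F` is `(G,H)`-minimal: it arrows `(G,H)` but no proper subgraph of it does. -/
def RamseyMinimal {α β γ : Type*} (F : SimpleGraph α) (G : SimpleGraph β)
    (H : SimpleGraph γ) : Prop :=
  Arrows F G H ∧ ∀ F' : SimpleGraph α, F' < F → ¬ Arrows F' G H

/-- `G` has no isolated vertices. -/
def NoIsolated {α : Type*} (G : SimpleGraph α) : Prop := ∀ v, ∃ w, G.Adj v w

/-- The single-edge graph `K₂`. -/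
def K2 : SimpleGraph (Fin 2) := ⊤

/-- The matching `nK₂` with `n` pairwise disjoint edges. -/
def Matching (n : ℕ) : SimpleGraph (Fin n × Fin 2) where
  Adj a b := a.1 = b.1 ∧ a.2 ≠ b.2
  symm := by constructor; intro a b h; exact ⟨h.1.symm, h.2.symm⟩
  loopless := by constructor; intro a h; exact h.2 rfl

/-- The disjoint union `nG` of `n` copies of `G`. -/
def nCopies {V : Type*} (n : ℕ) (G : SimpleGraph V) : SimpleGraph (Fin n × V) where
  Adj a b := a.1 = b.1 ∧ G.Adj a.2 b.2
  symm := by constructor; intro a b h; exact ⟨h.1.symm, h.2.symm⟩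
  loopless := by constructor; intro a h; exact G.loopless.irrefl a.2 h.2

/-- The infinite star `S_∞ = K_{1,∞}`, with center `none`. -/
def InfStar : SimpleGraph (Option ℕ) := SimpleGraph.fromRel (fun a _ => a = none)

/-- The finite star `K_{1,n}`, with center `none`. -/
def StarN (n : ℕ) : SimpleGraph (Option (Fin n)) := SimpleGraph.fromRel (fun a _ => a = none)

/-- The ray `P_∞` (one-way infinite path) on `ℕ`. -/
def Ray : SimpleGraph ℕ := SimpleGraph.fromRel (fun a b => b = a + 1)

/-- The `k`-ray `P_{k∞}`: `k` rays glued at a common endpoint `none`. -/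
def kRay (k : ℕ) : SimpleGraph (Option (Fin k × ℕ)) :=
  SimpleGraph.fromRel (fun a b =>
    (a = none ∧ ∃ i, b = some (i, 0)) ∨ (∃ i n, a = some (i, n) ∧ b = some (i, n + 1)))

namespace Stmt5Aux

variable {V W : Type}

/-- Ball of radius `n` around `pF` in `R`. -/
def reachSet (R : SimpleGraph W) (pF : W) : ℕ → Set W
  | 0 => {pF}
  | n + 1 => reachSet R pF n ∪ ⋃ u ∈ reachSet R pF n, R.neighborSet u

lemma reachSet_finite (R : SimpleGraph W) (pF : W) (hlf : ∀ w, (R.neighborSet w).Finite) :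
    ∀ n, (reachSet R pF n).Finite
  | 0 => Set.finite_singleton _
  | n + 1 => (reachSet_finite R pF hlf n).union
      ((reachSet_finite R pF hlf n).biUnion fun u _ => hlf u)

lemma reachSet_mono (R : SimpleGraph W) (pF : W) {m n : ℕ} (h : m ≤ n) :
    reachSet R pF m ⊆ reachSet R pF n := by
  induction n with
  | zero => simpa [Nat.le_zero.mp h] using Set.Subset.rfl
  | succ n ih =>
    rcases Nat.lt_or_ge m (n + 1) with h' | h'
    · exact (ih (Nat.lt_succ_iff.mp h')).trans Set.subset_union_left
    · have : m = n + 1 := le_antisymm h h'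
      subst this; exact Set.Subset.rfl

lemma walk_mem_reachSet (R : SimpleGraph W) (pF : W) :
    ∀ {u w : W} (p : R.Walk u w) (k : ℕ),
      u ∈ reachSet R pF k → w ∈ reachSet R pF (k + p.length)
  | _, _, SimpleGraph.Walk.nil, k, hu => hu
  | u, w, SimpleGraph.Walk.cons h p, k, hu => by
    have hx : _ ∈ reachSet R pF (k + 1) :=
      Set.mem_union_right _ (Set.mem_biUnion hu h)
    have hw := walk_mem_reachSet R pF p (k + 1) hx
    have harith : k + 1 + p.length = k + (SimpleGraph.Walk.cons h p).length := by
      simp [SimpleGraph.Walk.length_cons]; omega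
    rwa [harith] at hw

/-- Connected finite pointed subgraphs of `G`. -/
abbrev CFP (G : SimpleGraph V) (pG : V) : Type :=
  {S : G.Subgraph // S.verts.Finite ∧ S.coe.Connected ∧ pG ∈ S.verts}

variable (G : SimpleGraph V) (pG : V) (R : SimpleGraph W) (pF : W)

/-- Pointed injective red homomorphisms from `S`. -/
def X (S : CFP G pG) : Type :=
  {f : S.1.coe →g R // Function.Injective f ∧ f ⟨pG, S.2.2.2⟩ = pF}

def Xrestrict {S T : CFP G pG} (h : S ≤ T) (f : X G pG R pF T) : X G pG R pF S :=
  ⟨f.1.comp (SimpleGraph.Subgraph.inclusion h),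
   f.2.1.comp (SimpleGraph.Subgraph.inclusion.injective h), f.2.2⟩

open CategoryTheory in
def XFunctor : (CFP G pG)ᵒᵖ ⥤ Type where
  obj S := X G pG R pF S.unop
  map g := TypeCat.ofHom fun f => Xrestrict G pG R pF (CategoryTheory.leOfHom g.unop) f

lemma X_finite (hlfR : ∀ w, (R.neighborSet w).Finite) (S : CFP G pG) :
    Finite (X G pG R pF S) := by
  classical
  haveI : Fintype ↥S.1.verts := S.2.1.fintype
  set n := S.1.verts.ncard with hn
  have hcard : Fintype.card ↥S.1.verts = n := by
    rw [hn, ← Nat.card_coe_set_eq, Nat.card_eq_fintype_card]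
  have key : ∀ (f : X G pG R pF S) (v : ↥S.1.verts), f.1 v ∈ reachSet R pF n := by
    intro f v
    obtain ⟨q⟩ := S.2.2.1.preconnected ⟨pG, S.2.2.2⟩ v
    have hlen : q.toPath.1.length < n := hcard ▸ q.toPath.2.length_lt
    have hstart : f.1 ⟨pG, S.2.2.2⟩ ∈ reachSet R pF 0 := by
      rw [f.2.2]; exact Set.mem_singleton _
    have := walk_mem_reachSet R pF (q.toPath.1.map f.1) 0 hstart
    rw [SimpleGraph.Walk.length_map] at this
    exact reachSet_mono R pF (by omega) this
  haveI : Finite ↥(reachSet R pF n) :=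
    (reachSet_finite R pF hlfR n).to_subtype
  apply Finite.of_injective
    (fun f : X G pG R pF S => fun v : ↥S.1.verts =>
      (⟨f.1 v, key f v⟩ : ↥(reachSet R pF n)))
  intro f g hfg
  apply Subtype.ext
  apply DFunLike.ext
  intro v
  have := congrFun hfg v
  simpa [Subtype.mk.injEq] using this

end Stmt5Aux

/-- Pointed compactness of arrowing: if `F ⟶poi (Ĝ, H)` for every connected finite
pointed subgraph `Ĝ ⊆ G`, then `F ⟶poi (G, H)`. -/
theorem stmt5 {V W U : Type} (G : SimpleGraph V) (F : SimpleGraph W) (H : SimpleGraph U)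
    (pG : V) (pF : W)
    (hlfG : ∀ v, (G.neighborSet v).Finite) (hlfF : ∀ w, (F.neighborSet w).Finite)
    (hconn : G.Connected)
    (h : ∀ S : G.Subgraph, S.verts.Finite → S.coe.Connected → ∀ hp : pG ∈ S.verts,
      ∀ c : Sym2 W → Bool,
        (∃ f : S.coe →g colorSubgraph F c true, Function.Injective f ∧ f ⟨pG, hp⟩ = pF) ∨
          EmbedsIn H (colorSubgraph F c false)) :
    ∀ c : Sym2 W → Bool,
      (∃ f : G →g colorSubgraph F c true, Function.Injective f ∧ f pG = pF) ∨
        EmbedsIn H (colorSubgraph F c false) := by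
  intro c
  by_cases hb : EmbedsIn H (colorSubgraph F c false)
  · exact Or.inr hb
  left
  set R := colorSubgraph F c true with hRdef
  have hlfR : ∀ w, (R.neighborSet w).Finite :=
    fun w => (hlfF w).subset (fun x hx => hx.1)
  open Stmt5Aux in
  haveI hne : Nonempty (CFP G pG) :=
    ⟨⟨G.singletonSubgraph pG, Set.finite_singleton _,
      SimpleGraph.Subgraph.singletonSubgraph_connected.coe, rfl⟩⟩
  haveI hdir : IsDirected (CFP G pG) (· ≤ ·) :=
    ⟨fun S T => ⟨⟨S.1 ⊔ T.1, S.2.1.union T.2.1,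
      (SimpleGraph.Subgraph.connected_sup (SimpleGraph.Subgraph.Connected.preconnected ⟨S.2.2.1⟩) (SimpleGraph.Subgraph.Connected.preconnected ⟨T.2.2.1⟩) ⟨pG, S.2.2.2, T.2.2.2⟩).coe, Or.inl S.2.2.2⟩,
      Subtype.coe_le_coe.mp le_sup_left, Subtype.coe_le_coe.mp le_sup_right⟩⟩
  haveI : ∀ S : (CFP G pG)ᵒᵖ, Finite ((XFunctor G pG R pF).obj S) :=
    fun S => X_finite G pG R pF hlfR S.unop
  haveI : ∀ S : (CFP G pG)ᵒᵖ, Nonempty ((XFunctor G pG R pF).obj S) := by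
    intro S
    rcases h S.unop.1 S.unop.2.1 S.unop.2.2.1 S.unop.2.2.2 c with ⟨f, hf, hfp⟩ | hblue
    · exact ⟨⟨f, hf, hfp⟩⟩
    · exact absurd hblue hb
  obtain ⟨u, hu⟩ := nonempty_sections_of_finite_inverse_system (XFunctor G pG R pF)
  have cover : ∀ v : V, ∃ S : CFP G pG, v ∈ S.1.verts := by
    intro v
    obtain ⟨p⟩ := hconn.preconnected pG v
    exact ⟨⟨p.toSubgraph,
      by rw [SimpleGraph.Walk.verts_toSubgraph]; exact p.support.finite_toSet,
      p.toSubgraph_connected.coe, p.start_mem_verts_toSubgraph⟩,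
      p.end_mem_verts_toSubgraph⟩
  choose Sv hSv using cover
  have compat : ∀ (S T : CFP G pG) (v : V) (hvS : v ∈ S.1.verts) (hvT : v ∈ T.1.verts),
      (u (Opposite.op S)).1 ⟨v, hvS⟩ = (u (Opposite.op T)).1 ⟨v, hvT⟩ := by
    intro S T v hvS hvT
    obtain ⟨Uu, hSU, hTU⟩ := directed_of (· ≤ ·) S T
    have h1 := hu (CategoryTheory.homOfLE hSU).op
    have h2 := hu (CategoryTheory.homOfLE hTU).op
    have e1 : (u (Opposite.op S)).1 ⟨v, hvS⟩ = (u (Opposite.op Uu)).1 ⟨v, hSU.1 hvS⟩ := by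
      rw [← h1]; rfl
    have e2 : (u (Opposite.op T)).1 ⟨v, hvT⟩ = (u (Opposite.op Uu)).1 ⟨v, hTU.1 hvT⟩ := by
      rw [← h2]; rfl
    exact e1.trans e2.symm
  refine ⟨⟨fun v => (u (Opposite.op (Sv v))).1 ⟨v, hSv v⟩, ?_⟩, ?_, ?_⟩
  · -- adjacency
    intro a b hab
    obtain ⟨p⟩ := hconn.preconnected pG a
    have hfinT : (p.toSubgraph ⊔ G.subgraphOfAdj hab).verts.Finite := by
      rw [SimpleGraph.Subgraph.verts_sup, SimpleGraph.Walk.verts_toSubgraph]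
      refine p.support.finite_toSet.union ?_
      rw [SimpleGraph.subgraphOfAdj_verts]
      exact (Set.finite_singleton b).insert a
    have hconnT : (p.toSubgraph ⊔ G.subgraphOfAdj hab).coe.Connected :=
      (SimpleGraph.Subgraph.connected_sup p.toSubgraph_connected.preconnected (SimpleGraph.Subgraph.subgraphOfAdj_connected hab).preconnected
        ⟨a, p.end_mem_verts_toSubgraph, by simp⟩).coe
    set T : CFP G pG := ⟨p.toSubgraph ⊔ G.subgraphOfAdj hab, hfinT, hconnT,
      Or.inl p.start_mem_verts_toSubgraph⟩ with hT
    have haT : a ∈ T.1.verts := Or.inl p.end_mem_verts_toSubgraph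
    have hbT : b ∈ T.1.verts := Or.inr (by simp)
    have hadjT : T.1.coe.Adj ⟨a, haT⟩ ⟨b, hbT⟩ := Or.inr (by simp)
    have := (u (Opposite.op T)).1.map_rel' hadjT
    simp only []
    rw [compat (Sv a) T a (hSv a) haT, compat (Sv b) T b (hSv b) hbT]
    exact this
  · -- injectivity
    intro a b hab
    obtain ⟨T, haT', hbT'⟩ := directed_of (· ≤ ·) (Sv a) (Sv b)
    have haT : a ∈ T.1.verts := haT'.1 (hSv a)
    have hbT : b ∈ T.1.verts := hbT'.1 (hSv b)
    have hab' : (u (Opposite.op T)).1 ⟨a, haT⟩ = (u (Opposite.op T)).1 ⟨b, hbT⟩ := by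
      rw [← compat (Sv a) T a (hSv a) haT, ← compat (Sv b) T b (hSv b) hbT]
      exact hab
    have := (u (Opposite.op T)).2.1 hab'
    exact congrArg Subtype.val this
  · -- basepoint
    exact (u (Opposite.op (Sv pG))).2.2
end

section
/- If G is a connected graph that is not self-embeddable, then for every n ≥ 2 the disjoint union nG of n copies of G is (G, nK₂)-minimal. In particular, (G, nK₂)-minimal graphs exist. -/
open SimpleGraph

lemma arrows_nCopies {V : Type} (G : SimpleGraph V) (n : ℕ) :
    Arrows (nCopies n G) G (Matching n) := by
  classical
  intro c
  by_cases hall : ∃ i : Fin n, ∀ a b, G.Adj a b → c s((i,a),(i,b)) = true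
  · obtain ⟨i, hi⟩ := hall
    left
    refine ⟨⟨fun u => (i, u), fun {a b} h => ⟨⟨rfl, h⟩, hi a b h⟩⟩, fun a b h => ?_⟩
    exact congrArg Prod.snd h
  · push_neg at hall
    right
    choose a b hab hc using hall
    have hc' : ∀ i, c s((i, a i), (i, b i)) = false := fun i => Bool.not_eq_true _ |>.mp (hc i)
    have hadj : ∀ (i : Fin n) (x y : V), G.Adj x y → c s((i,x),(i,y)) = false →
        (colorSubgraph (nCopies n G) c false).Adj (i, x) (i, y) :=
      fun i x y h hcc => ⟨⟨rfl, h⟩, hcc⟩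
    refine ⟨⟨fun p => (p.1, if p.2 = 0 then a p.1 else b p.1), ?_⟩, ?_⟩
    · rintro ⟨i, u⟩ ⟨j, w⟩ ⟨h1, h2⟩
      dsimp only at h1 h2 ⊢
      subst h1
      fin_cases u <;> fin_cases w
      · exact absurd rfl h2
      · simp only [reduceIte]
        exact hadj i _ _ (hab i) (hc' i)
      · simp only [reduceIte]
        exact hadj i _ _ (hab i).symm (by rw [Sym2.eq_swap]; exact hc' i)
      · exact absurd rfl h2
    · rintro ⟨i, u⟩ ⟨j, w⟩ h
      have h1 : i = j := congrArg Prod.fst h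
      subst h1
      have h2 : (if u = 0 then a i else b i) = (if w = 0 then a i else b i) :=
        congrArg Prod.snd h
      have h3 := (hab i).ne
      fin_cases u <;> fin_cases w <;> simp only [reduceIte] at h2 <;>
        first
          | rfl
          | exact absurd h2 h3
          | exact absurd h2.symm h3

lemma firstCoord_const {V : Type} {G : SimpleGraph V} {n : ℕ} {H : SimpleGraph (Fin n × V)}
    (hH : ∀ ⦃a b : Fin n × V⦄, H.Adj a b → a.1 = b.1) (f : G →g H) {u w : V}
    (h : G.Reachable u w) : (f u).1 = (f w).1 := by
  obtain ⟨p⟩ := h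
  induction p with
  | nil => rfl
  | cons h _ ih => exact (hH (f.map_adj h)).trans ih


/-- If `G` is connected and not self-embeddable, then `nG` is `(G, nK₂)`-minimal for
every `n ≥ 2`; in particular `(G, nK₂)`-minimal graphs exist. -/
theorem stmt14 {V : Type} (G : SimpleGraph V) (hconn : G.Connected) (hni : NoIsolated G)
    (hse : ¬ SelfEmbeddable G) (n : ℕ) (hn : 2 ≤ n) :
    RamseyMinimal (nCopies n G) G (Matching n) ∧
    ∃ (W : Type) (F : SimpleGraph W), RamseyMinimal F G (Matching n) := by
  classical
  obtain ⟨v⟩ := hconn.nonempty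
  obtain ⟨w₀, hvw⟩ := hni v
  have main : RamseyMinimal (nCopies n G) G (Matching n) := by
    refine ⟨arrows_nCopies G n, ?_⟩
    intro F' hlt hA
    have hle : ∀ ⦃a b : Fin n × V⦄, F'.Adj a b → (nCopies n G).Adj a b := hlt.le
    obtain ⟨x, y, hxy, hxy'⟩ : ∃ x y, (nCopies n G).Adj x y ∧ ¬ F'.Adj x y := by
      by_contra h
      push_neg at h
      exact hlt.ne (le_antisymm hlt.le fun a b hab => h a b hab)
    set i₀ := x.1 with hi₀
    set c : Sym2 (Fin n × V) → Bool :=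
      fun s => if ∃ j : Fin n, j ≠ i₀ ∧ (j, v) ∈ s then false else true with hcdef
    have hctrue : ∀ s, c s = true ↔ ¬ ∃ j : Fin n, j ≠ i₀ ∧ (j, v) ∈ s := by
      intro s
      by_cases h : ∃ j : Fin n, j ≠ i₀ ∧ (j, v) ∈ s <;> simp [hcdef, h]
    have hcfalse : ∀ s, c s = false ↔ ∃ j : Fin n, j ≠ i₀ ∧ (j, v) ∈ s := by
      intro s
      by_cases h : ∃ j : Fin n, j ≠ i₀ ∧ (j, v) ∈ s <;> simp [hcdef, h]
    rcases hA c with ⟨f, hf⟩ | ⟨f, hf⟩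
    · -- a red copy of G yields a self-embedding of G, contradiction
      apply hse
      have hFadj : ∀ {a b : V}, G.Adj a b → F'.Adj (f a) (f b) ∧ c s(f a, f b) = true :=
        fun h => f.map_adj h
      have hconst : ∀ u : V, (f u).1 = (f v).1 := fun u =>
        firstCoord_const (fun a b (h : (colorSubgraph F' c true).Adj a b) => (hle h.1).1) f (hconn.preconnected u v)
      refine ⟨⟨fun u => (f u).2, fun {a b} h => (hle (hFadj h).1).2⟩, ?_, ?_⟩
      · intro a b h
        apply hf
        exact Prod.ext ((hconst a).trans (hconst b).symm) h
      · show (Sym2.map fun u => (f u).2) '' G.edgeSet ⊂ G.edgeSet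
        have hsub : (Sym2.map fun u => (f u).2) '' G.edgeSet ⊆ G.edgeSet := by
          rintro e ⟨e', he', rfl⟩
          induction e' with
          | _ a b =>
            rw [Sym2.map_pair_eq]
            exact G.mem_edgeSet.mpr (hle (hFadj (G.mem_edgeSet.mp he')).1).2
        rw [Set.ssubset_iff_of_subset hsub]
        by_cases hcase : (f v).1 = i₀
        · refine ⟨s(x.2, y.2), G.mem_edgeSet.mpr hxy.2, ?_⟩
          rintro ⟨e', he', hmap⟩
          induction e' with
          | _ a b =>
            have hab := G.mem_edgeSet.mp he'
            rw [Sym2.map_pair_eq] at hmap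
            have hfa : f a = (i₀, (f a).2) := Prod.ext ((hconst a).trans hcase) rfl
            have hfb : f b = (i₀, (f b).2) := Prod.ext ((hconst b).trans hcase) rfl
            have hF : F'.Adj (f a) (f b) := (hFadj hab).1
            have hx : x = (i₀, x.2) := rfl
            have hy : y = (i₀, y.2) := Prod.ext hxy.1.symm rfl
            rcases Sym2.eq_iff.mp hmap with ⟨h1, h2⟩ | ⟨h1, h2⟩
            · rw [hfa, hfb] at hF
              rw [h1, h2, ← hx, ← hy] at hF
              exact hxy' hF
            · rw [hfa, hfb] at hF
              rw [h1, h2, ← hx, ← hy] at hF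
              exact hxy' hF.symm
        · refine ⟨s(v, w₀), G.mem_edgeSet.mpr hvw, ?_⟩
          rintro ⟨e', he', hmap⟩
          induction e' with
          | _ a b =>
            have hab := G.mem_edgeSet.mp he'
            rw [Sym2.map_pair_eq] at hmap
            have hcred := (hctrue _).mp (hFadj hab).2
            apply hcred
            rcases Sym2.eq_iff.mp hmap with ⟨h1, _⟩ | ⟨_, h2⟩
            · exact ⟨(f a).1, by rw [hconst a]; exact hcase,
                Sym2.mem_iff.mpr (Or.inl (Prod.ext rfl h1.symm))⟩
            · exact ⟨(f b).1, by rw [hconst b]; exact hcase,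
                Sym2.mem_iff.mpr (Or.inr (Prod.ext rfl h2.symm))⟩
    · -- a blue matching of size n is impossible
      have hM : ∀ i : Fin n, (Matching n).Adj (i, 0) (i, 1) := fun i => ⟨rfl, (by decide : (0 : Fin 2) ≠ 1)⟩
      have hFadj : ∀ i : Fin n, F'.Adj (f (i,0)) (f (i,1)) ∧ c s(f (i,0), f (i,1)) = false :=
        fun i => f.map_adj (hM i)
      have hmem : ∀ i : Fin n, ∃ j : Fin n, j ≠ i₀ ∧ (j, v) ∈ s(f (i,0), f (i,1)) :=
        fun i => (hcfalse _).mp (hFadj i).2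
      choose j hjne hjmem using hmem
      have key : ∀ (i i' : Fin n) (b b' : Fin 2),
          (j i, v) = f (i, b) → (j i', v) = f (i', b') → j i = j i' → i = i' := by
        intro i i' b b' h1 h2 h
        have h3 : f (i, b) = f (i', b') := by rw [← h1, ← h2, h]
        exact congrArg Prod.fst (hf h3)
      have hjinj : Function.Injective j := by
        intro i i' h
        rcases Sym2.mem_iff.mp (hjmem i) with h1 | h1 <;>
          rcases Sym2.mem_iff.mp (hjmem i') with h2 | h2 <;>
          exact key _ _ _ _ h1 h2 h
      obtain ⟨i, hi⟩ := (Finite.injective_iff_surjective.mp hjinj) i₀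
      exact hjne i hi
  exact ⟨main, ⟨Fin n × V, nCopies n G, main⟩⟩
end

section
/- Every countable graph F having finitely many vertices of infinite degree (forming a set X) such that every edge of F is incident to a vertex of X, is self-embeddable. -/
open SimpleGraph

/-- Every countable graph with finitely many vertices of infinite degree, all of whose
edges are incident to such a vertex, is self-embeddable. -/
theorem stmt18 {W : Type} [Countable W] [Nonempty W] (F : SimpleGraph W)
    (hni : NoIsolated F)
    (hfin : {v | (F.neighborSet v).Infinite}.Finite)
    (hcov : ∀ a b, F.Adj a b → (F.neighborSet a).Infinite ∨ (F.neighborSet b).Infinite) :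
    SelfEmbeddable F := by
  classical
  set X : Set W := {v | (F.neighborSet v).Infinite} with hX
  have hnb : ∀ v ∉ X, ∀ w, F.Adj v w → w ∈ X := by
    intro v hv w hadj
    rcases hcov v w hadj with h | h
    · exact absurd h hv
    · exact h
  obtain ⟨v0⟩ := ‹Nonempty W›
  obtain ⟨w0, hvw0⟩ := hni v0
  obtain ⟨x0, hx0⟩ : ∃ x, x ∈ X := by
    rcases hcov v0 w0 hvw0 with h | h
    · exact ⟨v0, h⟩
    · exact ⟨w0, h⟩
  have hXc : (Xᶜ : Set W).Infinite := by
    have h1 : (F.neighborSet x0 \ X).Infinite := hx0.diff hfin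
    exact h1.mono (fun z hz => hz.2)
  haveI : Fintype ↥X := hfin.fintype
  let g : W → Set ↥X := fun v => {x | F.Adj v ↑x}
  obtain ⟨S, hS⟩ : ∃ S : Set ↥X, {v | v ∈ Xᶜ ∧ g v = S}.Infinite := by
    by_contra h
    push_neg at h
    apply hXc
    have hsub : (Xᶜ : Set W) ⊆ ⋃ S : Set ↥X, {v | v ∈ Xᶜ ∧ g v = S} := by
      intro v hv; exact Set.mem_iUnion.2 ⟨g v, hv, rfl⟩
    exact (Set.finite_iUnion h).subset hsub
  set Y : Set W := {v | v ∈ Xᶜ ∧ g v = S} with hY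
  have key : ∀ u ∈ Y, ∀ v ∈ Y, ∀ x, F.Adj u x → F.Adj v x := by
    intro u hu v hv x hadj
    have hxX : x ∈ X := hnb u hu.1 x hadj
    have hmem : (⟨x, hxX⟩ : ↥X) ∈ g u := hadj
    rw [hu.2, ← hv.2] at hmem
    exact hmem
  haveI : Infinite ↥Y := hS.to_subtype
  obtain ⟨d⟩ := nonempty_denumerable ↥Y
  let e : ↥Y ≃ ℕ := @Denumerable.eqv ↥Y d
  let σ : W → W := fun v => if h : v ∈ Y then ((e.symm (e ⟨v, h⟩ + 1)) : W) else v
  have hσY : ∀ v (h : v ∈ Y), σ v = ((e.symm (e ⟨v, h⟩ + 1)) : W) := by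
    intro v h; simp only [σ, dif_pos h]
  have hσn : ∀ v, v ∉ Y → σ v = v := by
    intro v h; simp only [σ, dif_neg h]
  have hσmemY : ∀ v (h : v ∈ Y), σ v ∈ Y := by
    intro v h; rw [hσY v h]; exact (e.symm (e ⟨v, h⟩ + 1)).2
  set y0 : W := ((e.symm 0 : ↥Y) : W) with hy0def
  have hy0Y : y0 ∈ Y := (e.symm 0).2
  have hy0 : ∀ v, σ v ≠ y0 := by
    intro v hv
    by_cases h : v ∈ Y
    · rw [hσY v h] at hv
      have h2 : e.symm (e ⟨v, h⟩ + 1) = e.symm 0 := Subtype.coe_injective hv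
      exact Nat.succ_ne_zero _ (e.symm.injective h2)
    · rw [hσn v h] at hv
      exact h (hv ▸ hy0Y)
  have hhom : ∀ a b, F.Adj a b → F.Adj (σ a) (σ b) := by
    intro a b hab
    by_cases ha : a ∈ Y <;> by_cases hb : b ∈ Y
    · exfalso
      rcases hcov a b hab with h | h
      · exact ha.1 h
      · exact hb.1 h
    · rw [hσn b hb]
      exact key a ha (σ a) (hσmemY a ha) b hab
    · rw [hσn a ha]
      exact (key b hb (σ b) (hσmemY b hb) a hab.symm).symm
    · rw [hσn a ha, hσn b hb]; exact hab
  have hinj : Function.Injective σ := by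
    intro a b hab
    by_cases ha : a ∈ Y <;> by_cases hb : b ∈ Y
    · rw [hσY a ha, hσY b hb] at hab
      have h2 := e.symm.injective (Subtype.coe_injective hab)
      have h3 : e ⟨a, ha⟩ = e ⟨b, hb⟩ := Nat.succ_injective h2
      exact congrArg Subtype.val (e.injective h3)
    · exfalso
      rw [hσn b hb] at hab
      exact hb (hab ▸ hσmemY a ha)
    · exfalso
      rw [hσn a ha] at hab
      exact ha (hab.symm ▸ hσmemY b hb)
    · rw [hσn a ha, hσn b hb] at hab; exact hab
  refine ⟨⟨σ, fun h => hhom _ _ h⟩, hinj, ?_⟩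
  rw [Set.ssubset_def]
  constructor
  · rintro ε ⟨ε0, hε0, rfl⟩
    induction ε0 using Sym2.ind with
    | _ a b =>
      rw [Sym2.map_pair_eq]
      rw [SimpleGraph.mem_edgeSet] at hε0 ⊢
      exact hhom a b hε0
  · intro hrev
    obtain ⟨w1, hw1⟩ := hni y0
    have hedge : s(y0, w1) ∈ F.edgeSet := hw1
    obtain ⟨ε0, hε0, heq⟩ := hrev hedge
    induction ε0 using Sym2.ind with
    | _ a b =>
      rw [Sym2.map_pair_eq, Sym2.eq_iff] at heq
      rcases heq with ⟨h1, _⟩ | ⟨_, h2⟩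
      · exact hy0 a h1
      · exact hy0 b h2
end
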